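/- Let T be a bistrong graded monad on a monoidal category C and let B be an object of C. Then right whiskering by B strictly preserves Kleisli composition: for Kleisli 1-cells (e, f) : A ⇝ A' and (e', f') : A' ⇝ A'', ((e, f) ; (e', f')) ⋉ B = ((e, f) ⋉ B) ; ((e', f') ⋉ B); explicitly, ((f ≫ (T_e).map f' ≫ (μ_{e,e'}).app A'') ▷ B) ≫ s^{e⊗e'}_{A'',B} = ((f ▷ B) ≫ s^e_{A',B}) ≫ (T_e).map ((f' ▷ B) ≫ s^{e'}_{A'',B}) ≫ (μ_{e,e'}).app (A'' ⊗ B). -/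

import Mathlib

open CategoryTheory Category MonoidalCategory

universe v₁ v₂ u₁ u₂

/-- A graded monad on a category `C` with grades in a monoidal category `E`:
a lax monoidal functor `T : E ⥤ (C ⥤ C)` where `C ⥤ C` is monoidal under composition,
so that `μ e e' : T_e ∘ T_{e'} ⟶ T_{e ⊗ e'}` with `(T_e ∘ T_{e'}) X = T_e (T_{e'} X)`. -/
structure GradedMonad (E : Type u₁) [Category.{v₁} E] [MonoidalCategory E]
    (C : Type u₂) [Category.{v₂} C] where
  T : E ⥤ C ⥤ C
  ε : 𝟭 C ⟶ T.obj (𝟙_ E)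
  μ : ∀ e e' : E, (T.obj e' ⋙ T.obj e) ⟶ T.obj (e ⊗ e')
  μ_natural : ∀ {e d e' d' : E} (γ : e ⟶ d) (δ : e' ⟶ d') (X : C),
    (T.map γ).app ((T.obj e').obj X) ≫ (T.obj d).map ((T.map δ).app X) ≫ (μ d d').app X =
      (μ e e').app X ≫ (T.map (γ ⊗ₘ δ)).app X
  left_unit : ∀ (e : E) (X : C),
    ε.app ((T.obj e).obj X) ≫ (μ (𝟙_ E) e).app X = (T.map (λ_ e).inv).app X
  right_unit : ∀ (e : E) (X : C),
    (T.obj e).map (ε.app X) ≫ (μ e (𝟙_ E)).app X = (T.map (ρ_ e).inv).app X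
  assoc : ∀ (e e' e'' : E) (X : C),
    (μ e e').app ((T.obj e'').obj X) ≫ (μ (e ⊗ e') e'').app X ≫
        (T.map (α_ e e' e'').hom).app X =
      (T.obj e).map ((μ e' e'').app X) ≫ (μ e (e' ⊗ e'')).app X

/-- A bistrong graded monad on a monoidal category `C`: a graded monad equipped with a
left strength `t` and a right strength `s`, natural in both objects and in the grade,
compatible with the unit `ε` and multiplication `μ` of the graded monad. -/
structure BistrongGradedMonad (E : Type u₁) [Category.{v₁} E] [MonoidalCategory E]
    (C : Type u₂) [Category.{v₂} C] [MonoidalCategory C] extends GradedMonad E C where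
  t : ∀ (e : E) (A B : C), A ⊗ (T.obj e).obj B ⟶ (T.obj e).obj (A ⊗ B)
  s : ∀ (e : E) (A B : C), (T.obj e).obj A ⊗ B ⟶ (T.obj e).obj (A ⊗ B)
  t_natural_left : ∀ (e : E) {A A' : C} (u : A ⟶ A') (B : C),
    (u ▷ (T.obj e).obj B) ≫ t e A' B = t e A B ≫ (T.obj e).map (u ▷ B)
  t_natural_right : ∀ (e : E) (A : C) {B B' : C} (v : B ⟶ B'),
    (A ◁ (T.obj e).map v) ≫ t e A B' = t e A B ≫ (T.obj e).map (A ◁ v)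
  t_natural_grade : ∀ {e e' : E} (γ : e ⟶ e') (A B : C),
    (A ◁ (T.map γ).app B) ≫ t e' A B = t e A B ≫ (T.map γ).app (A ⊗ B)
  s_natural_left : ∀ (e : E) {A A' : C} (u : A ⟶ A') (B : C),
    ((T.obj e).map u ▷ B) ≫ s e A' B = s e A B ≫ (T.obj e).map (u ▷ B)
  s_natural_right : ∀ (e : E) (A : C) {B B' : C} (v : B ⟶ B'),
    ((T.obj e).obj A ◁ v) ≫ s e A B' = s e A B ≫ (T.obj e).map (A ◁ v)
  s_natural_grade : ∀ {e e' : E} (γ : e ⟶ e') (A B : C),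
    ((T.map γ).app A ▷ B) ≫ s e' A B = s e A B ≫ (T.map γ).app (A ⊗ B)
  t_unit : ∀ A B : C, (A ◁ ε.app B) ≫ t (𝟙_ E) A B = ε.app (A ⊗ B)
  s_unit : ∀ A B : C, (ε.app A ▷ B) ≫ s (𝟙_ E) A B = ε.app (A ⊗ B)
  t_mul : ∀ (e e' : E) (A B : C),
    (A ◁ (μ e e').app B) ≫ t (e ⊗ e') A B =
      t e A ((T.obj e').obj B) ≫ (T.obj e).map (t e' A B) ≫ (μ e e').app (A ⊗ B)
  s_mul : ∀ (e e' : E) (A B : C),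
    ((μ e e').app A ▷ B) ≫ s (e ⊗ e') A B =
      s e ((T.obj e').obj A) B ≫ (T.obj e).map (s e' A B) ≫ (μ e e').app (A ⊗ B)

/-- Right whiskering by an object `B` strictly preserves Kleisli composition:
`((e, f) ; (e', f')) ⋉ B = ((e, f) ⋉ B) ; ((e', f') ⋉ B)`. -/
theorem BistrongGradedMonad.whiskerRight_kleisliComp {E : Type u₁} [Category.{v₁} E]
    [MonoidalCategory E] {C : Type u₂} [Category.{v₂} C] [MonoidalCategory C]
    (M : BistrongGradedMonad E C)
    (B : C) {A A' A'' : C} {e e' : E}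
    (f : A ⟶ (M.T.obj e).obj A') (f' : A' ⟶ (M.T.obj e').obj A'') :
    ((f ≫ (M.T.obj e).map f' ≫ (M.μ e e').app A'') ▷ B) ≫ M.s (e ⊗ e') A'' B =
      ((f ▷ B) ≫ M.s e A' B) ≫
        (M.T.obj e).map ((f' ▷ B) ≫ M.s e' A'' B) ≫ (M.μ e e').app (A'' ⊗ B) := by
  rw [comp_whiskerRight, comp_whiskerRight, assoc, assoc, M.s_mul,
    reassoc_of% M.s_natural_left e f' B]
  simp [Functor.map_comp]
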